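/- Suppose F = f + Ψ where f : ℝⁿ → ℝ is L-smooth (L > 0) and Ψ : ℝⁿ → ℝ ∪ {+∞} is proper, closed and convex, and suppose F attains its minimum at x*. Suppose {M_k}_{k≥1} is a sequence of affine subspaces of ℝⁿ and {x_k}, {y_k}, {z_k} are sequences such that for each k ≥ 1: (i) y_k minimizes ‖y − x*‖ over y ∈ M_k; (ii) x_k minimizes F over M_k; (iii) z_k ∈ M_k satisfies ⟨G_{1/L}(z_k), y_k − z_k⟩ ≥ 0 and −⟨G_{1/L}(z_k), x_k − z_k⟩ ≤ 0; and (iv) M_{k+1} contains the affine sets z_k + span{G_{1/L}(z_k)}, y_k + span{G_{1/L}(z_k)}, and x_k + span{G_{1/L}(x_k)}. Then for all k ≥ 2, F(x̄_k) ≤ F(x̄_{k−1}) − (1/(2L))‖G_{1/L}(x_k)‖², where x̄_k = x_k − G_{1/L}(x_k)/L. If in addition f is convex, then for all k ≥ 1, Φ_{k+1} ≤ Φ_k, where Φ_k = ‖y_k − x*‖² + k(k+1)(F(x_k) − F(x*))/(2L). -/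

import Mathlib

set_option maxHeartbeats 1000000

open scoped RealInnerProductSpace
open Filter Topology Set

lemma aux_le_of_small (a b C : ℝ) (h : ∀ l : ℝ, l ∈ Set.Ioc (0:ℝ) 1 → a ≤ b + l * C) :
    a ≤ b := by
  have ht : Tendsto (fun l : ℝ => b + l * C) (𝓝[>] (0:ℝ)) (𝓝 b) := by
    have h0 : Tendsto (fun l : ℝ => b + l * C) (𝓝 (0:ℝ)) (𝓝 (b + 0 * C)) :=
      (tendsto_const_nhds.add ((continuous_id.mul continuous_const).tendsto 0))
    simpa using h0.mono_left nhdsWithin_le_nhds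
  exact ge_of_tendsto ht (Filter.eventually_of_mem (Ioc_mem_nhdsGT one_pos) h)

lemma convex_grad_ineq {n : ℕ} (f : EuclideanSpace ℝ (Fin n) → ℝ)
    (hconv : ConvexOn ℝ Set.univ f) (z w g : EuclideanSpace ℝ (Fin n))
    (hg : HasGradientAt f g z) : f z + ⟪g, w - z⟫ ≤ f w := by
  set φ : ℝ → ℝ := fun s => f (z + s • (w - z)) with hφ
  have hline : HasDerivAt (fun s : ℝ => z + s • (w - z)) (w - z) 0 := by
    simpa using ((hasDerivAt_id (0:ℝ)).smul_const (w - z)).const_add z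
  have hfd : HasFDerivAt f (InnerProductSpace.toDual ℝ _ g) (z + (0:ℝ) • (w - z)) := by
    simpa using hg.hasFDerivAt
  have hd : HasDerivAt φ ⟪g, w - z⟫ 0 := by
    have := hfd.comp_hasDerivAt 0 hline
    simp at this; exact this
  have hslope : Tendsto (slope φ 0) (𝓝[>] (0:ℝ)) (𝓝 ⟪g, w - z⟫) :=
    ((hasDerivAt_iff_tendsto_slope.mp hd).mono_left
      (nhdsWithin_mono _ (fun x hx => ne_of_gt hx)))
  have hbound : ∀ s : ℝ, s ∈ Set.Ioc (0:ℝ) 1 → slope φ 0 s ≤ f w - f z := by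
    intro s hs
    have hcomb : φ s ≤ (1 - s) * f z + s * f w := by
      have h2 := hconv.2 (Set.mem_univ z) (Set.mem_univ w)
        (by linarith [hs.2] : (0:ℝ) ≤ 1 - s) (le_of_lt hs.1) (by ring)
      have hpt : z + s • (w - z) = (1 - s) • z + s • w := by module
      simpa [hφ, hpt, smul_eq_mul] using h2
    have h0 : φ 0 = f z := by simp [hφ]
    rw [slope_def_field, div_le_iff₀ (by simpa using hs.1)]
    nlinarith [hcomb, hs.1.le]
  have hle : ⟪g, w - z⟫ ≤ f w - f z :=
    le_of_tendsto hslope (Filter.eventually_of_mem (Ioc_mem_nhdsGT one_pos) hbound)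
  linarith

lemma prox_subgrad {n : ℕ} (Ψ : EuclideanSpace ℝ (Fin n) → EReal)
    (hconvex : ∀ x y : EuclideanSpace ℝ (Fin n), ∀ a b : ℝ, 0 ≤ a → 0 ≤ b → a + b = 1 →
      Ψ (a • x + b • y) ≤ (a : EReal) * Ψ x + (b : EReal) * Ψ y)
    (prox : ℝ → EuclideanSpace ℝ (Fin n) → EuclideanSpace ℝ (Fin n))
    (hprox : ∀ t : ℝ, 0 < t → ∀ x z : EuclideanSpace ℝ (Fin n),
      Ψ (prox t x) + ((‖x - prox t x‖ ^ 2 / (2 * t) : ℝ) : EReal)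
        ≤ Ψ z + ((‖x - z‖ ^ 2 / (2 * t) : ℝ) : EReal))
    (t : ℝ) (ht : 0 < t) (u w : EuclideanSpace ℝ (Fin n)) (ψp ψw : ℝ)
    (hp : Ψ (prox t u) = (ψp : EReal)) (hw : Ψ w = (ψw : EReal)) :
    ψp + t⁻¹ * ⟪u - prox t u, w - prox t u⟫ ≤ ψw := by
  set p := prox t u with hpdef
  apply aux_le_of_small _ _ (‖w - p‖ ^ 2 / (2 * t))
  intro l hl
  have hl0 := hl.1
  -- convexity bound at q = (1-l)p + l w
  set q : EuclideanSpace ℝ (Fin n) := (1 - l) • p + l • w with hq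
  have hconv := hconvex p w (1 - l) l (by linarith [hl.2]) hl0.le (by ring)
  rw [hp, hw] at hconv
  have hconv' : Ψ q ≤ (((1 - l) * ψp + l * ψw : ℝ) : EReal) := by
    rw [hq]; push_cast; exact hconv
  have hpr := hprox t ht u q
  rw [hp] at hpr
  have hpr' : ((ψp + ‖u - p‖ ^ 2 / (2 * t) : ℝ) : EReal)
      ≤ (((1 - l) * ψp + l * ψw + ‖u - q‖ ^ 2 / (2 * t) : ℝ) : EReal) := by
    push_cast
    calc (ψp : EReal) + ((‖u - p‖ ^ 2 / (2 * t) : ℝ) : EReal)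
        ≤ Ψ q + ((‖u - q‖ ^ 2 / (2 * t) : ℝ) : EReal) := hpr
      _ ≤ (((1 - l) * ψp + l * ψw : ℝ) : EReal) + ((‖u - q‖ ^ 2 / (2 * t) : ℝ) : EReal) :=
          add_le_add_left hconv' _
      _ = ((1 - l) * ψp + l * ψw : EReal) + ((‖u - q‖ ^ 2 / (2 * t) : ℝ) : EReal) := by
          push_cast; rfl
  have hreal : ψp + ‖u - p‖ ^ 2 / (2 * t)
      ≤ (1 - l) * ψp + l * ψw + ‖u - q‖ ^ 2 / (2 * t) := by
    exact_mod_cast hpr'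
  -- expand ‖u - q‖²
  have hqe : u - q = (u - p) - l • (w - p) := by rw [hq]; module
  have hnorm : ‖u - q‖ ^ 2
      = ‖u - p‖ ^ 2 - 2 * l * ⟪u - p, w - p⟫ + l ^ 2 * ‖w - p‖ ^ 2 := by
    rw [hqe]
    rw [norm_sub_sq_real]
    rw [real_inner_smul_right, norm_smul]
    simp [abs_of_pos hl0, mul_pow]
    ring
  rw [hnorm] at hreal
  set ip := ⟪u - p, w - p⟫ with hip
  set s := (2 * t)⁻¹ with hsdef
  have hts : t⁻¹ = 2 * s := by rw [hsdef]; field_simp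
  simp only [div_eq_mul_inv, ← hsdef] at hreal ⊢
  rw [hts]
  nlinarith [hreal, hl0]

/-- Key inequality, real form.  `p` is the prox-gradient point from `z`,
`Gz = L • (z - p)` is the prox-gradient mapping at `z`. -/
lemma key_ineq {n : ℕ} (L : ℝ) (hL : 0 < L)
    (f : EuclideanSpace ℝ (Fin n) → ℝ) (f' : EuclideanSpace ℝ (Fin n) → EuclideanSpace ℝ (Fin n))
    (hsmooth : ∀ x y : EuclideanSpace ℝ (Fin n),
      |f x - f y - ⟪f' y, x - y⟫| ≤ L / 2 * ‖x - y‖ ^ 2)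
    (Ψ : EuclideanSpace ℝ (Fin n) → EReal)
    (hconvex : ∀ x y : EuclideanSpace ℝ (Fin n), ∀ a b : ℝ, 0 ≤ a → 0 ≤ b → a + b = 1 →
      Ψ (a • x + b • y) ≤ (a : EReal) * Ψ x + (b : EReal) * Ψ y)
    (prox : ℝ → EuclideanSpace ℝ (Fin n) → EuclideanSpace ℝ (Fin n))
    (hprox : ∀ t : ℝ, 0 < t → ∀ x z : EuclideanSpace ℝ (Fin n),
      Ψ (prox t x) + ((‖x - prox t x‖ ^ 2 / (2 * t) : ℝ) : EReal)
        ≤ Ψ z + ((‖x - z‖ ^ 2 / (2 * t) : ℝ) : EReal))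
    (z w p Gz : EuclideanSpace ℝ (Fin n)) (ψp ψw : ℝ)
    (hpdef : p = prox (1 / L) (z - (1 / L) • f' z))
    (hGz : Gz = L • (z - p))
    (hp : Ψ p = (ψp : EReal)) (hw : Ψ w = (ψw : EReal))
    (hgrad : f z + ⟪f' z, w - z⟫ ≤ f w) :
    f p + ψp ≤ f w + ψw + ⟪Gz, z - w⟫ - 1 / (2 * L) * ‖Gz‖ ^ 2 := by
  have htL : (0:ℝ) < 1 / L := by positivity
  set u : EuclideanSpace ℝ (Fin n) := z - (1 / L) • f' z with hu
  have hA := prox_subgrad Ψ hconvex prox hprox (1 / L) htL u w ψp ψw (by rw [← hpdef]; exact hp) hw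
  rw [← hpdef] at hA
  -- notation
  set g := f' z with hg
  set d : EuclideanSpace ℝ (Fin n) := z - p with hd
  have hinv : (1 / L : ℝ)⁻¹ = L := by field_simp
  have hup : u - p = d - (1 / L) • g := by rw [hu, hd]; module
  have hwp : w - p = (w - z) + d := by rw [hd]; module
  -- scalar abbreviations
  have hA' : ψp + L * ((⟪d, w - z⟫ + ‖d‖ ^ 2) - (1 / L) * (⟪g, w - z⟫ + ⟪g, d⟫)) ≤ ψw := by
    have e1 : ⟪u - p, w - p⟫
        = (⟪d, w - z⟫ + ‖d‖ ^ 2) - (1 / L) * (⟪g, w - z⟫ + ⟪g, d⟫) := by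
      rw [hup, hwp, inner_sub_left, real_inner_smul_left, inner_add_right, inner_add_right,
        real_inner_self_eq_norm_sq]
    rw [hinv, e1] at hA
    exact hA
  -- smoothness bound
  have hs : f p - f z - ⟪g, p - z⟫ ≤ L / 2 * ‖p - z‖ ^ 2 := (abs_le.mp (hsmooth p z)).2
  have hpz : p - z = -d := by rw [hd]; module
  have hs' : f p ≤ f z - ⟪g, d⟫ + L / 2 * ‖d‖ ^ 2 := by
    rw [hpz, inner_neg_right, norm_neg] at hs
    linarith
  -- rewrite goal pieces
  have hGzw : ⟪Gz, z - w⟫ = -(L * ⟪d, w - z⟫) := by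
    have hzw : (z - w : EuclideanSpace ℝ (Fin n)) = -(w - z) := by module
    rw [hGz, real_inner_smul_left, hzw, inner_neg_right]
    ring
  have hGn : ‖Gz‖ ^ 2 = L ^ 2 * ‖d‖ ^ 2 := by
    rw [hGz, norm_smul, Real.norm_eq_abs, abs_of_pos hL, mul_pow]
  rw [hGzw, hGn]
  have hL2 : 1 / (2 * L) * (L ^ 2 * ‖d‖ ^ 2) = L / 2 * ‖d‖ ^ 2 := by field_simp
  rw [hL2]
  have hexp : L * ((⟪d, w - z⟫ + ‖d‖ ^ 2) - (1 / L) * (⟪g, w - z⟫ + ⟪g, d⟫))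
      = L * ⟪d, w - z⟫ + L * ‖d‖ ^ 2 - ⟪g, w - z⟫ - ⟪g, d⟫ := by field_simp; ring
  rw [hexp] at hA'
  linarith [hA', hs', hgrad]

/-- the idealized algorithmic framework in the non-strongly
convex / nonconvex composite setting: descent of `F(x̄_k)`, and, if `f` is
convex, monotonicity of the potential
`Φ_k = ‖y_k − x*‖² + k(k+1)(F(x_k) − F(x*))/(2L)`. -/
theorem idealized_algorithm_convex_nonconvex {n : ℕ} (L : ℝ) (hL : 0 < L)
    (f : EuclideanSpace ℝ (Fin n) → ℝ)
    (f' : EuclideanSpace ℝ (Fin n) → EuclideanSpace ℝ (Fin n))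
    (hdiff : ∀ x, HasGradientAt f (f' x) x)
    (hsmooth : ∀ x y : EuclideanSpace ℝ (Fin n),
      |f x - f y - ⟪f' y, x - y⟫| ≤ L / 2 * ‖x - y‖ ^ 2)
    (Ψ : EuclideanSpace ℝ (Fin n) → EReal)
    (hproper : (∀ x, Ψ x ≠ ⊥) ∧ (∃ x, Ψ x ≠ ⊤))
    (hclosed : LowerSemicontinuous Ψ)
    (hconvex : ∀ x y : EuclideanSpace ℝ (Fin n), ∀ a b : ℝ, 0 ≤ a → 0 ≤ b → a + b = 1 →
      Ψ (a • x + b • y) ≤ (a : EReal) * Ψ x + (b : EReal) * Ψ y)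
    (prox : ℝ → EuclideanSpace ℝ (Fin n) → EuclideanSpace ℝ (Fin n))
    (hprox : ∀ t : ℝ, 0 < t → ∀ x z : EuclideanSpace ℝ (Fin n),
      Ψ (prox t x) + ((‖x - prox t x‖ ^ 2 / (2 * t) : ℝ) : EReal)
        ≤ Ψ z + ((‖x - z‖ ^ 2 / (2 * t) : ℝ) : EReal))
    (F : EuclideanSpace ℝ (Fin n) → EReal)
    (hF : ∀ x, F x = (f x : EReal) + Ψ x)
    (G : ℝ → EuclideanSpace ℝ (Fin n) → EuclideanSpace ℝ (Fin n))
    (hG : ∀ t x, G t x = t⁻¹ • (x - prox t (x - t • f' x)))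
    (xstar : EuclideanSpace ℝ (Fin n)) (hxstar : ∀ w, F xstar ≤ F w)
    (M : ℕ → AffineSubspace ℝ (EuclideanSpace ℝ (Fin n)))
    (x y z : ℕ → EuclideanSpace ℝ (Fin n))
    (hy : ∀ k, 1 ≤ k → y k ∈ M k ∧ ∀ w ∈ M k, ‖y k - xstar‖ ≤ ‖w - xstar‖)
    (hx : ∀ k, 1 ≤ k → x k ∈ M k ∧ ∀ w ∈ M k, F (x k) ≤ F w)
    (hz : ∀ k, 1 ≤ k → z k ∈ M k ∧
      0 ≤ ⟪G (1 / L) (z k), y k - z k⟫ ∧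
      -⟪G (1 / L) (z k), x k - z k⟫ ≤ 0)
    (hM : ∀ k, 1 ≤ k → ∀ c : ℝ,
      z k + c • G (1 / L) (z k) ∈ M (k + 1) ∧
      y k + c • G (1 / L) (z k) ∈ M (k + 1) ∧
      x k + c • G (1 / L) (x k) ∈ M (k + 1)) :
    (∀ k, 2 ≤ k →
      F (x k - (1 / L) • G (1 / L) (x k))
        ≤ F (x (k - 1) - (1 / L) • G (1 / L) (x (k - 1)))
          - ((1 / (2 * L) * ‖G (1 / L) (x k)‖ ^ 2 : ℝ) : EReal)) ∧
    (ConvexOn ℝ Set.univ f → ∀ k : ℕ, 1 ≤ k →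
      ((‖y (k + 1) - xstar‖ ^ 2 : ℝ) : EReal)
          + ((((k : ℝ) + 1) * ((k : ℝ) + 2) / (2 * L) : ℝ) : EReal)
            * (F (x (k + 1)) - F xstar)
        ≤ ((‖y k - xstar‖ ^ 2 : ℝ) : EReal)
          + (((k : ℝ) * ((k : ℝ) + 1) / (2 * L) : ℝ) : EReal)
            * (F (x k) - F xstar)) := by
  have hbot := hproper.1
  have ht : (0:ℝ) < 1 / L := by positivity
  have hFcoe : ∀ (v : EuclideanSpace ℝ (Fin n)) (r : ℝ), Ψ v = (r : EReal) →
      F v = ((f v + r : ℝ) : EReal) := by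
    intro v r h; rw [hF, h]; exact (EReal.coe_add _ _).symm
  have hPsiReal : ∀ v, F v ≠ ⊤ → ∃ r : ℝ, Ψ v = (r : EReal) := by
    intro v hv
    have h2 : Ψ v ≠ ⊤ := by
      intro h; exact hv (by rw [hF v, h, EReal.coe_add_top])
    exact ⟨(Ψ v).toReal, (EReal.coe_toReal h2 (hbot v)).symm⟩
  have hPsiProx : ∀ u : EuclideanSpace ℝ (Fin n), ∃ s : ℝ, Ψ (prox (1/L) u) = (s : EReal) := by
    intro u
    obtain ⟨x0, hx0⟩ := hproper.2
    have h := hprox (1/L) ht u x0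
    have h2 : Ψ (prox (1/L) u) ≠ ⊤ := by
      intro htop
      rw [htop, EReal.top_add_coe] at h
      have hx0' : Ψ x0 = ((Ψ x0).toReal : EReal) := (EReal.coe_toReal hx0 (hbot x0)).symm
      rw [hx0', ← EReal.coe_add] at h
      exact (EReal.coe_lt_top _).not_ge h
    exact ⟨_, (EReal.coe_toReal h2 (hbot _)).symm⟩
  have hFstar_ne_top : F xstar ≠ ⊤ := by
    obtain ⟨x0, hx0⟩ := hproper.2
    have hx0' : Ψ x0 = ((Ψ x0).toReal : EReal) := (EReal.coe_toReal hx0 (hbot x0)).symm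
    have h := hxstar x0
    rw [hFcoe x0 _ hx0'] at h
    exact ne_top_of_le_ne_top (EReal.coe_ne_top _) h
  obtain ⟨ψs, hψs⟩ := hPsiReal xstar hFstar_ne_top
  have hinvL : ((1:ℝ)/L)⁻¹ = L := by field_simp
  have hGeq : ∀ v, G (1/L) v = L • (v - prox (1/L) (v - (1/L) • f' v)) := by
    intro v; rw [hG, hinvL]
  have hbar : ∀ v, v - (1/L) • G (1/L) v = prox (1/L) (v - (1/L) • f' v) := by
    intro v
    rw [hGeq, smul_smul, show (1/L) * L = 1 by field_simp, one_smul, sub_sub_cancel]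
  have descent : ∀ v (ψ : ℝ), Ψ v = (ψ : EReal) →
      ∃ q : ℝ, F (v - (1/L) • G (1/L) v) = (q : EReal) ∧
        q ≤ f v + ψ - 1/(2*L) * ‖G (1/L) v‖^2 := by
    intro v ψ hψ
    obtain ⟨ψp, hψp⟩ := hPsiProx (v - (1/L) • f' v)
    have hkey := key_ineq L hL f f' hsmooth Ψ hconvex prox hprox v v _ (G (1/L) v) ψp ψ rfl
      (hGeq v) hψp hψ (by simp)
    refine ⟨f (prox (1/L) (v - (1/L) • f' v)) + ψp, ?_, ?_⟩
    · rw [hbar v]; exact hFcoe _ _ hψp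
    · have hz0 : ⟪G (1/L) v, v - v⟫ = (0:ℝ) := by simp
      rw [hz0] at hkey
      linarith
  constructor
  · -- Part 1 : descent of F(x̄ₖ)
    intro k hk
    have hj1 : 1 ≤ k - 1 := by omega
    have hjk : k - 1 + 1 = k := by omega
    have hmem : x (k-1) - (1/L) • G (1/L) (x (k-1)) ∈ M k := by
      have h := (hM (k-1) hj1 (-(1/L))).2.2
      rw [hjk] at h
      simpa [sub_eq_add_neg, neg_smul] using h
    have hle : F (x k) ≤ F (x (k-1) - (1/L) • G (1/L) (x (k-1))) := (hx k (by omega)).2 _ hmem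
    by_cases hT : F (x (k-1) - (1/L) • G (1/L) (x (k-1))) = ⊤
    · rw [hT, EReal.top_sub_coe]; exact le_top
    · have hxk_ne : F (x k) ≠ ⊤ := ne_top_of_le_ne_top hT hle
      obtain ⟨ψ, hψ⟩ := hPsiReal _ hxk_ne
      obtain ⟨q, hq, hqle⟩ := descent (x k) ψ hψ
      have hFnb : F (x (k-1) - (1/L) • G (1/L) (x (k-1))) ≠ ⊥ := by
        rw [hF]
        intro h
        rcases EReal.add_eq_bot_iff.mp h with h' | h'
        · exact EReal.coe_ne_bot _ h'
        · exact hbot _ h'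
      obtain ⟨B, hB⟩ : ∃ B : ℝ, F (x (k-1) - (1/L) • G (1/L) (x (k-1))) = (B : EReal) :=
        ⟨_, (EReal.coe_toReal hT hFnb).symm⟩
      rw [hq, hB, ← EReal.coe_sub, EReal.coe_le_coe_iff]
      have hfb : f (x k) + ψ ≤ B := by
        rw [hFcoe _ _ hψ, hB, EReal.coe_le_coe_iff] at hle; exact hle
      linarith
  · -- Part 2 : potential decrease
    intro hconvf k hk
    by_cases hT : F (x k) = ⊤
    · rw [hT, hFcoe xstar _ hψs, EReal.top_sub_coe]
      have hk0 : (0:ℝ) < (k:ℝ) := by exact_mod_cast hk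
      have hC : (0:ℝ) < (k:ℝ) * ((k:ℝ)+1) / (2*L) := by positivity
      rw [EReal.coe_mul_top_of_pos hC, EReal.coe_add_top]
      exact le_top
    · obtain ⟨ψk, hψk⟩ := hPsiReal _ hT
      obtain ⟨ψp, hψp⟩ := hPsiProx (z k - (1/L) • f' (z k))
      have hkey1 := key_ineq L hL f f' hsmooth Ψ hconvex prox hprox (z k) (x k) _
        (G (1/L) (z k)) ψp ψk rfl (hGeq (z k)) hψp hψk
        (convex_grad_ineq f hconvf (z k) (x k) (f' (z k)) (hdiff (z k)))
      have hkey2 := key_ineq L hL f f' hsmooth Ψ hconvex prox hprox (z k) xstar _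
        (G (1/L) (z k)) ψp ψs rfl (hGeq (z k)) hψp hψs
        (convex_grad_ineq f hconvf (z k) xstar (f' (z k)) (hdiff (z k)))
      have hpmem : prox (1/L) (z k - (1/L) • f' (z k)) ∈ M (k+1) := by
        have h := (hM k hk (-(1/L))).1
        rwa [neg_smul, ← sub_eq_add_neg, hbar (z k)] at h
      have hle1 : F (x (k+1)) ≤ ((f (prox (1/L) (z k - (1/L) • f' (z k))) + ψp : ℝ) : EReal) := by
        rw [← hFcoe _ _ hψp]
        exact (hx (k+1) (by omega)).2 _ hpmem
      have hx1_ne : F (x (k+1)) ≠ ⊤ := ne_top_of_le_ne_top (EReal.coe_ne_top _) hle1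
      obtain ⟨r1, hr1⟩ := hPsiReal _ hx1_ne
      have hr1le : f (x (k+1)) + r1 ≤ f (prox (1/L) (z k - (1/L) • f' (z k))) + ψp := by
        rw [hFcoe _ _ hr1, EReal.coe_le_coe_iff] at hle1; exact hle1
      obtain ⟨hzmem, hin1, hin2⟩ := hz k hk
      -- the y-step
      have hymem := (hM k hk (-(((k:ℝ)+1)/(2*L)))).2.1
      have hynorm := (hy (k+1) (by omega)).2 _ hymem
      have hsq : ‖y (k+1) - xstar‖^2
          ≤ ‖y k + (-(((k:ℝ)+1)/(2*L))) • G (1/L) (z k) - xstar‖^2 :=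
        pow_le_pow_left₀ (norm_nonneg _) hynorm 2
      have hexp : ‖y k + (-(((k:ℝ)+1)/(2*L))) • G (1/L) (z k) - xstar‖^2
          = ‖y k - xstar‖^2 + 2 * (-(((k:ℝ)+1)/(2*L))) * ⟪G (1/L) (z k), y k - xstar⟫
            + (((k:ℝ)+1)/(2*L))^2 * ‖G (1/L) (z k)‖^2 := by
        have h1 : y k + (-(((k:ℝ)+1)/(2*L))) • G (1/L) (z k) - xstar
            = (y k - xstar) + (-(((k:ℝ)+1)/(2*L))) • G (1/L) (z k) := by module
        rw [h1, norm_add_sq_real, real_inner_smul_right, norm_smul,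
          real_inner_comm (y k - xstar) (G (1/L) (z k))]
        simp only [Real.norm_eq_abs, mul_pow, sq_abs, abs_neg]
        ring
      rw [hexp] at hsq
      have hd_e : ⟪G (1/L) (z k), z k - xstar⟫ ≤ ⟪G (1/L) (z k), y k - xstar⟫ := by
        have heq : ⟪G (1/L) (z k), y k - xstar⟫ - ⟪G (1/L) (z k), z k - xstar⟫
            = ⟪G (1/L) (z k), y k - z k⟫ := by
          rw [← inner_sub_right]; congr 1; module
        linarith
      have hzx : ⟪G (1/L) (z k), z k - x k⟫ ≤ 0 := by
        have heq : ⟪G (1/L) (z k), z k - x k⟫ = -⟪G (1/L) (z k), x k - z k⟫ := by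
          rw [← inner_neg_right]; congr 1; module
        linarith
      have hg2 : (0:ℝ) ≤ ‖G (1/L) (z k)‖^2 := sq_nonneg _
      have hq1 : f (prox (1/L) (z k - (1/L) • f' (z k))) + ψp
          ≤ (f (x k) + ψk) - 1/(2*L) * ‖G (1/L) (z k)‖^2 := by linarith
      have hq2 : f (prox (1/L) (z k - (1/L) • f' (z k))) + ψp
          ≤ (f xstar + ψs) + ⟪G (1/L) (z k), y k - xstar⟫
            - 1/(2*L) * ‖G (1/L) (z k)‖^2 := by linarith
      have hK0 : (0:ℝ) ≤ (k:ℝ) := Nat.cast_nonneg k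
      have hα : (0:ℝ) ≤ (k:ℝ)*((k:ℝ)+1)/(2*L) := by positivity
      have hβ : (0:ℝ) ≤ ((k:ℝ)+1)/L := by positivity
      have m1 := mul_le_mul_of_nonneg_left hq1 hα
      have m2 := mul_le_mul_of_nonneg_left hq2 hβ
      have m3 := mul_le_mul_of_nonneg_left hr1le
        (by positivity : (0:ℝ) ≤ ((k:ℝ)+1)*((k:ℝ)+2)/(2*L))
      have hslack : (0:ℝ) ≤ ((k:ℝ)+1)/(4*L^2) * ‖G (1/L) (z k)‖^2 := by positivity
      have hfinal : ‖y (k+1) - xstar‖^2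
            + ((k:ℝ)+1)*((k:ℝ)+2)/(2*L) * ((f (x (k+1)) + r1) - (f xstar + ψs))
          ≤ ‖y k - xstar‖^2
            + (k:ℝ)*((k:ℝ)+1)/(2*L) * ((f (x k) + ψk) - (f xstar + ψs)) := by
        simp only [div_eq_mul_inv, mul_inv, ← inv_pow] at m1 m2 m3 hsq hslack ⊢
        linarith [m1, m2, m3, hsq, hslack]
      rw [hFcoe _ _ hr1, hFcoe _ _ hψk, hFcoe _ _ hψs, ← EReal.coe_sub, ← EReal.coe_sub,
        ← EReal.coe_mul, ← EReal.coe_mul, ← EReal.coe_add, ← EReal.coe_add,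
        EReal.coe_le_coe_iff]
      linarith [hfinal]
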